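/- For every φ ∈ L²(ℝ⁺, m), n ≥ 0 and a > 0, the function t ↦ (1/t) ∫₀^t s e^{-s} φ(s) e_{2n}((t−s)/a) ds belongs to L²(m), with ‖·‖²_{L²(m)} ≤ ‖φ‖²_{L²(m)} · a · ∫₀^∞ e^{-u} ∫₀^{u/a} e_{2n}(v)² dv du, where dm(t) = t e^{-t} dt. -/

import Mathlib

open Set MeasureTheory Real intervalIntegral

/-- The measure `dm(t) = t e^{-t} dt` on `(0,∞)`. -/
noncomputable def mMeasure : Measure ℝ :=
  (volume.restrict (Ioi (0:ℝ))).withDensity (fun t => ENNReal.ofReal (t * Real.exp (-t)))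

/-- The Laguerre polynomials `e_ν(t) = Σ_{m=0}^{ν} C(ν+1, ν−m) (−t)^m / m!`. -/
noncomputable def lagE (ν : ℕ) (t : ℝ) : ℝ :=
  ∑ m ∈ Finset.range (ν+1), (Nat.choose (ν+1) (ν-m) : ℝ) * (-t)^m / m.factorial

open Filter
open scoped ENNReal NNReal

section Aux
lemma lagE_continuous (ν : ℕ) : Continuous (lagE ν) := by
  unfold lagE
  exact continuous_finset_sum _ fun m _ => by fun_prop

lemma lagE_bound (ν : ℕ) : ∃ C : ℝ, 0 ≤ C ∧ ∀ v : ℝ, 0 ≤ v → (lagE ν v)^2 ≤ C * (1+v)^(2*ν) := by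
  refine ⟨(∑ m ∈ Finset.range (ν+1), ((Nat.choose (ν+1) (ν-m) : ℝ) / m.factorial))^2,
    by positivity, fun v hv => ?_⟩
  have h1 : |lagE ν v| ≤ (∑ m ∈ Finset.range (ν+1), ((Nat.choose (ν+1) (ν-m) : ℝ) / m.factorial)) * (1+v)^ν := by
    calc |lagE ν v| ≤ ∑ m ∈ Finset.range (ν+1), |(Nat.choose (ν+1) (ν-m) : ℝ) * (-v)^m / m.factorial| :=
          Finset.abs_sum_le_sum_abs _ _
      _ ≤ ∑ m ∈ Finset.range (ν+1), ((Nat.choose (ν+1) (ν-m) : ℝ) / m.factorial) * (1+v)^ν := by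
          refine Finset.sum_le_sum fun m hm => ?_
          rw [abs_div, abs_mul, abs_pow, abs_neg, abs_of_nonneg hv]
          simp only [Nat.abs_cast]
          rw [div_mul_eq_mul_div]
          gcongr
          calc v ^ m ≤ (1+v)^m := by gcongr; linarith
            _ ≤ (1+v)^ν := by
                apply pow_le_pow_right₀ (by linarith)
                exact Nat.lt_succ_iff.mp (Finset.mem_range.mp hm)
      _ = _ := by rw [← Finset.sum_mul]
  calc (lagE ν v)^2 = |lagE ν v|^2 := (sq_abs _).symm
    _ ≤ ((∑ m ∈ Finset.range (ν+1), ((Nat.choose (ν+1) (ν-m) : ℝ) / m.factorial)) * (1+v)^ν)^2 := by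
        apply pow_le_pow_left₀ (abs_nonneg _) h1
    _ = _ := by rw [mul_pow, ← pow_mul, mul_comm ν 2]

lemma exp_pow_integrable (k : ℕ) : IntegrableOn (fun t => Real.exp (-t) * t^k) (Ioi (0:ℝ)) := by
  have h := Real.GammaIntegral_convergent (s := k+1) (by positivity)
  refine h.congr_fun (fun x hx => ?_) measurableSet_Ioi
  simp only [add_sub_cancel_right, Real.rpow_natCast]

lemma exp_one_add_pow_integrable (k : ℕ) :
    IntegrableOn (fun t => Real.exp (-t) * (1+t)^k) (Ioi (0:ℝ)) := by
  have : ∀ t : ℝ, Real.exp (-t) * (1+t)^k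
      = ∑ j ∈ Finset.range (k+1), (k.choose j : ℝ) * (Real.exp (-t) * t^j) := by
    intro t
    rw [add_comm, add_pow]
    rw [Finset.mul_sum]
    refine Finset.sum_congr rfl fun j hj => by ring
  simp only [this]
  exact integrable_finset_sum _ fun j _ => (exp_pow_integrable j).const_mul _

lemma J_cont (ν : ℕ) : Continuous (fun x : ℝ => ∫ v in (0:ℝ)..x, (lagE ν v)^2) :=
  intervalIntegral.continuous_primitive
    (fun c b => (((lagE_continuous ν).pow 2).intervalIntegrable c b)) 0

lemma J_nonneg (ν : ℕ) {x : ℝ} (hx : 0 ≤ x) : 0 ≤ ∫ v in (0:ℝ)..x, (lagE ν v)^2 :=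
  intervalIntegral.integral_nonneg hx (fun u _ => sq_nonneg _)

lemma J_bound (ν : ℕ) : ∃ C : ℝ, 0 ≤ C ∧ ∀ x : ℝ, 0 ≤ x →
    (∫ v in (0:ℝ)..x, (lagE ν v)^2) ≤ C * (1+x)^(2*ν+1) := by
  obtain ⟨C, hC0, hC⟩ := lagE_bound ν
  refine ⟨C, hC0, fun x hx => ?_⟩
  have h1x : (0:ℝ) ≤ 1 + x := by linarith
  calc (∫ v in (0:ℝ)..x, (lagE ν v)^2) ≤ ∫ _v in (0:ℝ)..x, C * (1+x)^(2*ν) := by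
        refine intervalIntegral.integral_mono_on hx
          (((lagE_continuous ν).pow 2).intervalIntegrable 0 x) intervalIntegrable_const
          (fun v hv => (hC v hv.1).trans ?_)
        gcongr
        · linarith [hv.1]
        · exact hv.2
    _ = C * (1+x)^(2*ν) * x := by
        rw [intervalIntegral.integral_const, sub_zero, smul_eq_mul]; ring
    _ ≤ C * (1+x)^(2*ν+1) := by
        rw [pow_succ]
        have : C * (1+x)^(2*ν) * x ≤ C * (1+x)^(2*ν) * (1+x) := by
          have h0 : (0:ℝ) ≤ C * (1+x)^(2*ν) := by positivity
          nlinarith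
        linarith [this]

lemma G_integrable (ν : ℕ) {a : ℝ} (ha : 0 < a) :
    IntegrableOn (fun t => Real.exp (-t) * ∫ v in (0:ℝ)..(t/a), (lagE ν v)^2) (Ioi (0:ℝ)) := by
  obtain ⟨C, hC0, hC⟩ := J_bound ν
  set k := 2*ν+1 with hk
  have hbound : IntegrableOn (fun t => (C*(1+1/a)^k) * (Real.exp (-t) * (1+t)^k)) (Ioi (0:ℝ)) :=
    (exp_one_add_pow_integrable k).const_mul _
  refine Integrable.mono' hbound ?_ ?_
  · exact ((Real.continuous_exp.comp continuous_neg).mul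
      ((J_cont ν).comp (continuous_id.div_const a))).aestronglyMeasurable
  · filter_upwards [ae_restrict_mem measurableSet_Ioi] with t ht
    have ht0 : (0:ℝ) < t := ht
    have hta : (0:ℝ) ≤ t/a := by positivity
    rw [Real.norm_eq_abs, abs_of_nonneg (mul_nonneg (Real.exp_pos _).le (J_nonneg ν hta))]
    have h2 : (1+t/a)^k ≤ ((1+1/a)*(1+t))^k := by
      have hterm : 1 + t/a ≤ (1+1/a)*(1+t) := by
        have h3 : (0:ℝ) ≤ 1/a + t := by positivity
        have expand : (1+1/a)*(1+t) = 1 + t/a + (1/a + t) := by field_simp; ring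
        linarith
      gcongr
    calc Real.exp (-t) * (∫ v in (0:ℝ)..(t/a), (lagE ν v)^2)
        ≤ Real.exp (-t) * (C * ((1+1/a)*(1+t))^k) := by
          have := (hC _ hta).trans (by gcongr : C * (1+t/a)^k ≤ C * ((1+1/a)*(1+t))^k)
          gcongr
      _ = C*(1+1/a)^k * (Real.exp (-t) * (1+t)^k) := by rw [mul_pow]; ring


lemma mMeasure_density_meas : Measurable (fun t : ℝ => ENNReal.ofReal (t * Real.exp (-t))) := by
  fun_prop

lemma mMeasure_ae_Ioi : ∀ᵐ t ∂mMeasure, t ∈ Ioi (0:ℝ) :=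
  (withDensity_absolutelyContinuous _ _).ae_le (ae_restrict_mem measurableSet_Ioi)

lemma mMeasure_ae_restrict {φ ψ : ℝ → ℝ} (h : φ =ᵐ[mMeasure] ψ) :
    ∀ᵐ s ∂(volume.restrict (Ioi (0:ℝ))), φ s = ψ s := by
  have h' : ∀ᵐ x ∂((volume.restrict (Ioi (0:ℝ))).withDensity
      (fun t => ENNReal.ofReal (t * Real.exp (-t)))), φ x = ψ x := h
  rw [ae_withDensity_iff mMeasure_density_meas] at h'
  replace h := h'
  filter_upwards [h, ae_restrict_mem measurableSet_Ioi] with s h1 h2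
  apply h1
  have : (0:ℝ) < s * Real.exp (-s) := by
    have : (0:ℝ) < s := h2
    positivity
  exact (ENNReal.ofReal_pos.mpr this).ne'

lemma integrableOn_sq_of_memL2 {φ : ℝ → ℝ} (hφ : MemLp φ 2 mMeasure) :
    IntegrableOn (fun t => φ t^2 * (t * Real.exp (-t))) (Ioi (0:ℝ)) volume := by
  have h1 : Integrable (fun t => ‖φ t‖ ^ ((2:ℝ≥0∞)).toReal) mMeasure :=
    hφ.integrable_norm_rpow (by norm_num) (by norm_num)
  rw [mMeasure, integrable_withDensity_iff mMeasure_density_meas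
    (Eventually.of_forall fun x => ENNReal.ofReal_lt_top)] at h1
  refine h1.congr ?_
  filter_upwards [ae_restrict_mem measurableSet_Ioi] with t ht
  have ht0 : (0:ℝ) < t := ht
  rw [ENNReal.toReal_ofReal (by positivity)]
  norm_num

lemma memL2_of_integrableOn_sq {T : ℝ → ℝ} (hm : AEStronglyMeasurable T mMeasure)
    (h : IntegrableOn (fun t => T t^2 * (t * Real.exp (-t))) (Ioi (0:ℝ)) volume) :
    MemLp T 2 mMeasure := by
  rw [memLp_two_iff_integrable_sq hm]
  rw [mMeasure, integrable_withDensity_iff mMeasure_density_meas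
    (Eventually.of_forall fun x => ENNReal.ofReal_lt_top)]
  refine h.congr ?_
  filter_upwards [ae_restrict_mem measurableSet_Ioi] with t ht
  have ht0 : (0:ℝ) < t := ht
  rw [ENNReal.toReal_ofReal (by positivity)]

end Aux

/-- The convolution-type operator `t ↦ (1/t)∫₀^t s e^{−s} φ(s) e_{2n}((t−s)/a) ds` maps
`L²(m)` to `L²(m)` with the explicit norm bound. -/
theorem convolution_operator_L2_bound (φ : ℝ → ℝ) (hφ : MemLp φ 2 mMeasure)
    (n : ℕ) (a : ℝ) (ha : 0 < a) :
    MemLp (fun t => (1/t) * ∫ s in (0:ℝ)..t, s * Real.exp (-s) * φ s * lagE (2*n) ((t-s)/a))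
      2 mMeasure ∧
    (∫ t in Ioi (0:ℝ),
        ((1/t) * ∫ s in (0:ℝ)..t, s * Real.exp (-s) * φ s * lagE (2*n) ((t-s)/a))^2
          * (t * Real.exp (-t)))
      ≤ (∫ t in Ioi (0:ℝ), (φ t)^2 * (t * Real.exp (-t))) * a *
        ∫ u in Ioi (0:ℝ), Real.exp (-u) * ∫ v in (0:ℝ)..(u/a), (lagE (2*n) v)^2 := by
  have contE : Continuous (lagE (2*n)) := lagE_continuous _
  -- measurable representative vanishing off `Ioi 0`
  obtain ⟨ψ₀, hψ₀m, hψ₀e⟩ := hφ.1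
  set ψ : ℝ → ℝ := (Ioi (0:ℝ)).indicator ψ₀ with hψdef
  have hψm : StronglyMeasurable ψ := hψ₀m.indicator measurableSet_Ioi
  have hφψ_m : φ =ᵐ[mMeasure] ψ := by
    refine hψ₀e.trans ?_
    filter_upwards [mMeasure_ae_Ioi] with t ht
    simp [hψdef, indicator_of_mem ht]
  have hφψ_v : ∀ᵐ s ∂(volume.restrict (Ioi (0:ℝ))), φ s = ψ s := mMeasure_ae_restrict hφψ_m
  have hψ_zero : ∀ s : ℝ, s ≤ 0 → ψ s = 0 := fun s hs => by
    simp [hψdef, indicator_of_notMem, not_lt.mpr hs]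
  -- integrability facts
  have hint_φsq : IntegrableOn (fun t => φ t^2 * (t * Real.exp (-t))) (Ioi (0:ℝ)) volume :=
    integrableOn_sq_of_memL2 hφ
  have hint_ψsq : IntegrableOn (fun t => ψ t^2 * (t * Real.exp (-t))) (Ioi (0:ℝ)) volume := by
    refine hint_φsq.congr ?_
    filter_upwards [hφψ_v] with t h
    rw [h]
  have hint_w : IntegrableOn (fun s : ℝ => s * Real.exp (-s)) (Ioi (0:ℝ)) volume := by
    have := exp_pow_integrable 1
    refine this.congr ?_
    filter_upwards with t
    simp [mul_comm]
  have hint_wψ : Integrable (fun s : ℝ => s * Real.exp (-s) * ψ s) volume := by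
    rw [← integrableOn_univ, ← Iic_union_Ioi (a := (0:ℝ))]
    refine IntegrableOn.union ?_ ?_
    · refine (integrableOn_zero).congr_fun (fun s hs => ?_) measurableSet_Iic
      rw [hψ_zero s hs, mul_zero]
    · refine Integrable.mono' (hint_w.add hint_ψsq) ?_ ?_
      · exact (((measurable_id.mul (by fun_prop)).mul hψm.measurable)).aestronglyMeasurable
      · filter_upwards [ae_restrict_mem measurableSet_Ioi] with s hs
        have hs0 : (0:ℝ) < s := hs
        have hw0 : (0:ℝ) ≤ s * Real.exp (-s) := by positivity
        rw [Real.norm_eq_abs, abs_mul, abs_of_nonneg hw0]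
        have habs : |ψ s| ≤ 1 + ψ s^2 := by nlinarith [sq_abs (ψ s), sq_nonneg (|ψ s| - 1)]
        calc (s * Real.exp (-s)) * |ψ s| ≤ (s * Real.exp (-s)) * (1 + ψ s^2) := by gcongr
          _ = s * Real.exp (-s) + ψ s^2 * (s * Real.exp (-s)) := by ring
  -- the ψ-version of the transform
  set F : ℝ → ℝ := fun t => ∫ s in (0:ℝ)..t, s * Real.exp (-s) * ψ s * lagE (2*n) ((t-s)/a)
    with hFdef
  have hFφ : ∀ t ∈ Ioi (0:ℝ),
      (∫ s in (0:ℝ)..t, s * Real.exp (-s) * φ s * lagE (2*n) ((t-s)/a)) = F t := by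
    intro t ht
    have ht0 : (0:ℝ) < t := ht
    show _ = ∫ s in (0:ℝ)..t, s * Real.exp (-s) * ψ s * lagE (2*n) ((t-s)/a)
    rw [intervalIntegral.integral_of_le ht0.le, intervalIntegral.integral_of_le ht0.le]
    refine integral_congr_ae ?_
    have hsub : ∀ᵐ s ∂(volume.restrict (Ioc (0:ℝ) t)), φ s = ψ s :=
      ae_restrict_of_ae_restrict_of_subset Ioc_subset_Ioi_self hφψ_v
    filter_upwards [hsub] with s h
    rw [h]
  have hIj : ∀ (j : ℕ) (c b : ℝ),
      IntervalIntegrable (fun s => s * Real.exp (-s) * ψ s * s^j) volume c b := by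
    intro j c b
    rw [intervalIntegrable_iff]
    have h := IntegrableOn.mul_continuousOn (K := uIcc c b) (hint_wψ.integrableOn)
      ((continuous_pow j).continuousOn) isCompact_uIcc
    exact h.mono_set uIoc_subset_uIcc
  have hPcont : ∀ j : ℕ, Continuous (fun t => ∫ s in (0:ℝ)..t, s * Real.exp (-s) * ψ s * s^j) :=
    fun j => intervalIntegral.continuous_primitive (fun c b => hIj j c b) 0
  have hFeq : ∀ t : ℝ, F t = ∑ m ∈ Finset.range (2*n+1), ∑ j ∈ Finset.range (m+1),
      ((Nat.choose (2*n+1) (2*n-m) : ℝ) / m.factorial * a⁻¹^m * (m.choose j) * (-t)^(m-j)) *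
        ∫ s in (0:ℝ)..t, s * Real.exp (-s) * ψ s * s^j := by
    intro t
    show (∫ s in (0:ℝ)..t, s * Real.exp (-s) * ψ s * lagE (2*n) ((t-s)/a)) = _
    have hexp : ∀ s : ℝ, s * Real.exp (-s) * ψ s * lagE (2*n) ((t-s)/a)
        = ∑ m ∈ Finset.range (2*n+1), ∑ j ∈ Finset.range (m+1),
          ((Nat.choose (2*n+1) (2*n-m) : ℝ) / m.factorial * a⁻¹^m * (m.choose j) * (-t)^(m-j)) *
            (s * Real.exp (-s) * ψ s * s^j) := by
      intro s
      rw [lagE, Finset.mul_sum]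
      refine Finset.sum_congr rfl fun m _ => ?_
      have h1 : (-((t-s)/a))^m = (s + -t)^m * a⁻¹^m := by
        rw [← mul_pow]
        congr 1
        field_simp
        ring
      rw [h1, add_pow]
      simp only [Finset.sum_mul, Finset.sum_div, Finset.mul_sum]
      refine Finset.sum_congr rfl fun j _ => ?_
      ring
    have hfun : (fun s => s * Real.exp (-s) * ψ s * lagE (2*n) ((t-s)/a))
        = fun s => ∑ m ∈ Finset.range (2*n+1), ∑ j ∈ Finset.range (m+1),
          ((Nat.choose (2*n+1) (2*n-m) : ℝ) / m.factorial * a⁻¹^m * (m.choose j) * (-t)^(m-j)) *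
            (s * Real.exp (-s) * ψ s * s^j) := funext hexp
    rw [hfun, intervalIntegral.integral_finset_sum (fun m _ => by
      have h2 := IntervalIntegrable.sum (μ := volume) (a := 0) (b := t) (Finset.range (m+1))
        (f := fun j s => ((Nat.choose (2*n+1) (2*n-m) : ℝ) / m.factorial * a⁻¹^m * (m.choose j)
          * (-t)^(m-j)) * (s * Real.exp (-s) * ψ s * s^j))
        (fun j _ => (hIj j 0 t).const_mul _)
      have h3 : (∑ j ∈ Finset.range (m+1), fun s => ((Nat.choose (2*n+1) (2*n-m) : ℝ)
            / m.factorial * a⁻¹^m * (m.choose j) * (-t)^(m-j)) * (s * Real.exp (-s) * ψ s * s^j))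
          = fun s => ∑ j ∈ Finset.range (m+1), ((Nat.choose (2*n+1) (2*n-m) : ℝ)
            / m.factorial * a⁻¹^m * (m.choose j) * (-t)^(m-j)) * (s * Real.exp (-s) * ψ s * s^j) := by
        funext s
        simp
      rw [h3] at h2
      exact h2)]
    refine Finset.sum_congr rfl fun m _ => ?_
    rw [intervalIntegral.integral_finset_sum (fun j _ => (hIj j 0 t).const_mul _)]
    exact Finset.sum_congr rfl fun j _ => intervalIntegral.integral_const_mul _ _
  have hFcont : Continuous F := by
    have hFfun : F = fun t => ∑ m ∈ Finset.range (2*n+1), ∑ j ∈ Finset.range (m+1),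
        ((Nat.choose (2*n+1) (2*n-m) : ℝ) / m.factorial * a⁻¹^m * (m.choose j) * (-t)^(m-j)) *
          ∫ s in (0:ℝ)..t, s * Real.exp (-s) * ψ s * s^j := funext hFeq
    rw [hFfun]
    refine continuous_finset_sum _ fun m _ => continuous_finset_sum _ fun j _ => ?_
    exact Continuous.mul (by fun_prop) (hPcont j)
  -- nonnegative constant N
  set N : ℝ := ∫ t in Ioi (0:ℝ), φ t^2 * (t * Real.exp (-t)) with hNdef
  have hNψ : N = ∫ t in Ioi (0:ℝ), ψ t^2 * (t * Real.exp (-t)) := by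
    refine integral_congr_ae ?_
    filter_upwards [hφψ_v] with t h
    rw [h]
  have hN0 : 0 ≤ N := setIntegral_nonneg measurableSet_Ioi fun t ht => by
    have : (0:ℝ) < t := ht
    positivity
  -- the key pointwise bound
  have key_bound : ∀ t ∈ Ioi (0:ℝ), ((1/t) * F t)^2 * (t * Real.exp (-t))
      ≤ N * a * (Real.exp (-t) * ∫ v in (0:ℝ)..(t/a), (lagE (2*n) v)^2) := by
    intro t ht
    have ht0 : (0:ℝ) < t := ht
    set μt := volume.restrict (Ioc (0:ℝ) t) with hμt
    set J : ℝ := ∫ v in (0:ℝ)..(t/a), (lagE (2*n) v)^2 with hJdef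
    set A : ℝ := ∫ s in Ioc (0:ℝ) t, ψ s^2 * (s * Real.exp (-s)) with hAdef
    set B : ℝ := ∫ s in Ioc (0:ℝ) t, (lagE (2*n) ((t-s)/a))^2 * (s * Real.exp (-s)) with hBdef
    have hA0 : 0 ≤ A := setIntegral_nonneg measurableSet_Ioc fun s hs => by
      have : (0:ℝ) < s := hs.1; positivity
    have hB0 : 0 ≤ B := setIntegral_nonneg measurableSet_Ioc fun s hs => by
      have : (0:ℝ) < s := hs.1; positivity
    have hA_le : A ≤ N := by
      rw [hNψ]
      refine setIntegral_mono_set hint_ψsq ?_ (HasSubset.Subset.eventuallyLE Ioc_subset_Ioi_self)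
      filter_upwards [ae_restrict_mem measurableSet_Ioi] with s hs
      have : (0:ℝ) < s := hs; positivity
    -- Cauchy-Schwarz
    have hFsq : F t^2 ≤ A * B := by
      set f : ℝ → ℝ := fun s => |ψ s| * Real.sqrt (s * Real.exp (-s)) with hfdef
      set g : ℝ → ℝ := fun s => |lagE (2*n) ((t-s)/a)| * Real.sqrt (s * Real.exp (-s)) with hgdef
      have hfm : AEStronglyMeasurable f μt :=
        ((hψm.measurable.abs).mul (by fun_prop)).aestronglyMeasurable
      have hgc : Continuous g := by
        refine Continuous.mul ?_ (by fun_prop)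
        exact (contE.comp (by fun_prop)).abs
      have hf2 : Integrable (fun s => f s^2) μt := by
        refine (hint_ψsq.mono_set Ioc_subset_Ioi_self).congr ?_
        filter_upwards [ae_restrict_mem measurableSet_Ioc] with s hs
        have hs0 : (0:ℝ) < s := hs.1
        rw [hfdef]
        simp only
        rw [mul_pow, sq_abs, Real.sq_sqrt (by positivity)]
      have hg2 : Integrable (fun s => g s^2) μt := by
        refine Continuous.integrableOn_Ioc ?_
        exact hgc.pow 2
      have hfL : MemLp f (ENNReal.ofReal 2) μt := by
        rw [ENNReal.ofReal_ofNat]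
        exact (memLp_two_iff_integrable_sq hfm).mpr hf2
      have hgL : MemLp g (ENNReal.ofReal 2) μt := by
        rw [ENNReal.ofReal_ofNat]
        exact (memLp_two_iff_integrable_sq hgc.aestronglyMeasurable).mpr hg2
      have hpq : Real.HolderConjugate 2 2 := Real.HolderConjugate.two_two
      have hCS := integral_mul_norm_le_Lp_mul_Lq hpq hfL hgL
      have hFabs : |F t| ≤ ∫ s, ‖f s‖ * ‖g s‖ ∂μt := by
        have hFt : F t = ∫ s in (0:ℝ)..t, s * Real.exp (-s) * ψ s * lagE (2*n) ((t-s)/a) := rfl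
        have h1 : |F t| ≤ ∫ s in (0:ℝ)..t, ‖s * Real.exp (-s) * ψ s * lagE (2*n) ((t-s)/a)‖ := by
          rw [hFt, ← Real.norm_eq_abs]
          exact intervalIntegral.norm_integral_le_integral_norm ht0.le
        rw [intervalIntegral.integral_of_le ht0.le] at h1
        refine h1.trans (le_of_eq (integral_congr_ae ?_))
        filter_upwards [ae_restrict_mem measurableSet_Ioc] with s hs
        have hs0 : (0:ℝ) < s := hs.1
        have hw0 : (0:ℝ) ≤ s * Real.exp (-s) := by positivity
        rw [hfdef, hgdef]
        simp only [Real.norm_eq_abs]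
        rw [abs_of_nonneg (by positivity : (0:ℝ) ≤ |ψ s| * Real.sqrt (s * Real.exp (-s))),
          abs_of_nonneg (by positivity : (0:ℝ) ≤ |lagE (2*n) ((t-s)/a)| * Real.sqrt (s * Real.exp (-s)))]
        have hsq := Real.mul_self_sqrt hw0
        calc |s * Real.exp (-s) * ψ s * lagE (2*n) ((t-s)/a)|
            = |ψ s| * |lagE (2*n) ((t-s)/a)| * (s * Real.exp (-s)) := by
              rw [abs_mul, abs_mul, abs_mul, abs_of_nonneg (le_of_lt hs0),
                abs_of_nonneg (Real.exp_pos (-s)).le]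
              ring
          _ = |ψ s| * |lagE (2*n) ((t-s)/a)|
              * (Real.sqrt (s * Real.exp (-s)) * Real.sqrt (s * Real.exp (-s))) := by rw [hsq]
          _ = (|ψ s| * Real.sqrt (s * Real.exp (-s)))
              * (|lagE (2*n) ((t-s)/a)| * Real.sqrt (s * Real.exp (-s))) := by ring
      have hfint : (∫ s, ‖f s‖ ^ (2:ℝ) ∂μt) = A := by
        rw [hAdef]
        refine integral_congr_ae ?_
        filter_upwards [ae_restrict_mem measurableSet_Ioc] with s hs
        have hs0 : (0:ℝ) < s := hs.1
        rw [Real.rpow_two, Real.norm_eq_abs, sq_abs, hfdef]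
        simp only
        rw [mul_pow, sq_abs, Real.sq_sqrt (by positivity)]
      have hgint : (∫ s, ‖g s‖ ^ (2:ℝ) ∂μt) = B := by
        rw [hBdef]
        refine integral_congr_ae ?_
        filter_upwards [ae_restrict_mem measurableSet_Ioc] with s hs
        have hs0 : (0:ℝ) < s := hs.1
        rw [Real.rpow_two, Real.norm_eq_abs, sq_abs, hgdef]
        simp only
        rw [mul_pow, sq_abs, Real.sq_sqrt (by positivity)]
      rw [hfint, hgint] at hCS
      have hFle : |F t| ≤ A ^ (1/(2:ℝ)) * B ^ (1/(2:ℝ)) := hFabs.trans hCS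
      calc F t^2 = |F t|^2 := (sq_abs _).symm
        _ ≤ (A ^ (1/(2:ℝ)) * B ^ (1/(2:ℝ)))^2 := by
            exact pow_le_pow_left₀ (abs_nonneg _) hFle 2
        _ = A * B := by
            rw [← Real.sqrt_eq_rpow, ← Real.sqrt_eq_rpow, mul_pow,
              Real.sq_sqrt hA0, Real.sq_sqrt hB0]
    -- bound on B
    have hJ0 : 0 ≤ J := by
      rw [hJdef]
      exact intervalIntegral.integral_nonneg (by positivity) fun u _ => sq_nonneg _
    have hB_le : B ≤ t * (a * J) := by
      have hBint : B = ∫ s in (0:ℝ)..t, (lagE (2*n) ((t-s)/a))^2 * (s * Real.exp (-s)) := by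
        rw [hBdef, intervalIntegral.integral_of_le ht0.le]
      calc B ≤ ∫ s in (0:ℝ)..t, t * (lagE (2*n) ((t-s)/a))^2 := by
            rw [hBint]
            refine intervalIntegral.integral_mono_on ht0.le
              (Continuous.intervalIntegrable (by fun_prop) 0 t)
              (Continuous.intervalIntegrable (by fun_prop) 0 t) fun s hs => ?_
            have h1 : s * Real.exp (-s) ≤ t := by
              have he : Real.exp (-s) ≤ 1 := Real.exp_le_one_iff.mpr (by linarith [hs.1])
              nlinarith [hs.1, hs.2, Real.exp_pos (-s)]
            have h2 : (0:ℝ) ≤ (lagE (2*n) ((t-s)/a))^2 := sq_nonneg _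
            nlinarith
        _ = t * ∫ s in (0:ℝ)..t, (lagE (2*n) ((t-s)/a))^2 :=
            intervalIntegral.integral_const_mul _ _
        _ = t * ∫ x in (0:ℝ)..t, (lagE (2*n) (x/a))^2 := by
            congr 1
            have h3 := intervalIntegral.integral_comp_sub_left (a := (0:ℝ)) (b := t)
              (fun x => (lagE (2*n) (x/a))^2) t
            simpa using h3
        _ = t * (a * J) := by
            rw [hJdef]
            congr 1
            have h4 := intervalIntegral.integral_comp_div (a := (0:ℝ)) (b := t) (c := a)
              (f := fun v => (lagE (2*n) v)^2) ha.ne'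
            simpa [zero_div, smul_eq_mul] using h4
    -- combine
    have h1 : F t^2 ≤ N * (t * (a * J)) := hFsq.trans (mul_le_mul hA_le hB_le hB0 hN0)
    have hgoal : ((1/t) * F t)^2 * (t * Real.exp (-t)) = F t^2 * (Real.exp (-t) / t) := by
      field_simp
    rw [hgoal]
    calc F t^2 * (Real.exp (-t) / t) ≤ (N * (t * (a * J))) * (Real.exp (-t) / t) := by
          have : (0:ℝ) ≤ Real.exp (-t) / t := by positivity
          exact mul_le_mul_of_nonneg_right h1 this
      _ = N * a * (Real.exp (-t) * J) := by
          field_simp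
  -- membership in L²(m) for the ψ-version
  have hTm : AEStronglyMeasurable (fun t => (1/t) * F t) mMeasure := by
    refine (Measurable.aestronglyMeasurable ?_)
    exact ((measurable_const.div measurable_id).mul hFcont.measurable)
  have hint_G : IntegrableOn
      (fun t => Real.exp (-t) * ∫ v in (0:ℝ)..(t/a), (lagE (2*n) v)^2) (Ioi (0:ℝ)) volume :=
    G_integrable _ ha
  have hint_T2 : IntegrableOn (fun t => ((1/t) * F t)^2 * (t * Real.exp (-t))) (Ioi (0:ℝ))
      volume := by
    refine Integrable.mono' (hint_G.const_mul (N * a)) ?_ ?_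
    · refine (Measurable.aestronglyMeasurable ?_)
      exact (((measurable_const.div measurable_id).mul hFcont.measurable).pow_const 2).mul
        (by fun_prop)
    · filter_upwards [ae_restrict_mem measurableSet_Ioi] with t ht
      have ht0 : (0:ℝ) < t := ht
      rw [Real.norm_eq_abs, abs_of_nonneg (by positivity)]
      exact key_bound t ht
  have hmemT : MemLp (fun t => (1/t) * F t) 2 mMeasure := memL2_of_integrableOn_sq hTm hint_T2
  constructor
  · refine hmemT.ae_eq ?_
    filter_upwards [mMeasure_ae_Ioi] with t ht
    rw [hFφ t ht]
  · calc (∫ t in Ioi (0:ℝ),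
        ((1/t) * ∫ s in (0:ℝ)..t, s * Real.exp (-s) * φ s * lagE (2*n) ((t-s)/a))^2
          * (t * Real.exp (-t)))
        = ∫ t in Ioi (0:ℝ), ((1/t) * F t)^2 * (t * Real.exp (-t)) := by
          refine setIntegral_congr_fun measurableSet_Ioi fun t ht => ?_
          rw [hFφ t ht]
      _ ≤ ∫ t in Ioi (0:ℝ),
            N * a * (Real.exp (-t) * ∫ v in (0:ℝ)..(t/a), (lagE (2*n) v)^2) := by
          refine setIntegral_mono_on hint_T2 (hint_G.const_mul (N*a)) measurableSet_Ioi ?_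
          exact key_bound
      _ = N * a * ∫ u in Ioi (0:ℝ), Real.exp (-u) * ∫ v in (0:ℝ)..(u/a), (lagE (2*n) v)^2 := by
          rw [MeasureTheory.integral_const_mul]
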